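/- For the derivations Q_i on ℤ/2[x₁,…,xₙ] defined by Q_i(x_j) = x_j^{2^{i+1}}, one has Q_i ∘ Q_i = 0 for every i. -/
import Mathlib


open MvPolynomial

/-- The `i`-th Milnor operation as a `ℤ/2`-linear derivation on `ℤ/2[x₁,…,xₙ]`,
determined by `Q_i(x_j) = x_j^{2^{i+1}}`. -/
noncomputable def milnorQ (n k : ℕ) :
    Derivation (ZMod 2) (MvPolynomial (Fin n) (ZMod 2)) (MvPolynomial (Fin n) (ZMod 2)) :=
  MvPolynomial.mkDerivation (ZMod 2) (fun i => X i ^ (2 ^ (k + 1)))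

lemma milnorQ_X (n k : ℕ) (j : Fin n) :
    milnorQ n k (X j) = X j ^ (2 ^ (k + 1)) := by
  simp [milnorQ, mkDerivation_X]

lemma milnorQ_QX (n k : ℕ) (j : Fin n) :
    milnorQ n k (milnorQ n k (X j)) = 0 := by
  rw [milnorQ_X, Derivation.leibniz_pow, milnorQ_X]
  have : ((2 ^ (k + 1) : ℕ) : MvPolynomial (Fin n) (ZMod 2)) = 0 := by
    rw [Nat.cast_pow, pow_succ]
    rw [show ((2 : ℕ) : MvPolynomial (Fin n) (ZMod 2)) = 0 from by
      simpa using CharTwo.two_eq_zero (R := MvPolynomial (Fin n) (ZMod 2))]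
    simp
  rw [nsmul_eq_mul, this, zero_mul]

/-- `Q_i ∘ Q_i = 0` for every `i`. -/
theorem milnorQ_comp_self (n i : ℕ) (p : MvPolynomial (Fin n) (ZMod 2)) :
    milnorQ n i (milnorQ n i p) = 0 := by
  induction p using MvPolynomial.induction_on with
  | C a =>
      have : milnorQ n i (C a) = 0 := by
        simpa using (milnorQ n i).map_algebraMap a
      simp [this]
  | add p q hp hq => simp [map_add, hp, hq]
  | mul_X p j hp =>
      rw [Derivation.leibniz]
      simp only [smul_eq_mul, map_add, Derivation.leibniz, hp, milnorQ_QX, smul_eq_mul,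
        mul_zero, zero_add, add_zero, zero_mul]
      rw [mul_comm, CharTwo.add_self_eq_zero]
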